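/- Let N ∈ ℕ, n ∈ {2,…,N}, and Z = (z_{j,k}) ∈ ℂ^{N×n}. With z̃_k, a_{j,k}, U_j(x), G_m(Z) as defined, one has G_2(Z) = −((N−2)!/N!) ∑_{K ⊆ {1,…,n}, |K|=2} (∑_{j=1}^N ∏_{k∈K} a_{j,k}) · ∏_{k ∈ {1,…,n}∖K} z̃_k, and if moreover n ≥ 3 and N ≥ 3, G_3(Z) = 2((N−3)!/N!) ∑_{K ⊆ {1,…,n}, |K|=3} (∑_{j=1}^N ∏_{k∈K} a_{j,k}) · ∏_{k ∈ {1,…,n}∖K} z̃_k. -/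

import Mathlib

open scoped BigOperators

/-- The permanent of a rectangular complex matrix `Z ∈ ℂ^{N×n}` (`n ≤ N`):
`per(Z) = ∑_{j ∈ [N]^n_≠} ∏_{k=1}^n z_{j_k,k}`, i.e. the sum over injective
maps `Fin n → Fin N`. -/
noncomputable def rectPermanent {N n : ℕ} (Z : Matrix (Fin N) (Fin n) ℂ) : ℂ :=
  ∑ j ∈ Finset.univ.filter (fun j : Fin n → Fin N => Function.Injective j),
    ∏ k : Fin n, Z (j k) k

/-- `z̃_k = (1/N) ∑_{j=1}^N z_{j,k}`, the `k`-th column mean. -/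
noncomputable def ztilde {N n : ℕ} (Z : Matrix (Fin N) (Fin n) ℂ) (k : Fin n) : ℂ :=
  (N : ℂ)⁻¹ * ∑ j : Fin N, Z j k

/-- `a_{j,k} = z_{j,k} − z̃_k`. -/
noncomputable def aEnt {N n : ℕ} (Z : Matrix (Fin N) (Fin n) ℂ) (j : Fin N) (k : Fin n) : ℂ :=
  Z j k - ztilde Z k

/-- `G_m(Z) = ((N−m)!/((n−m)!·N!)) · [x_1⋯x_n]((∏_j (1+U_j(x)))·(∑_k z̃_k x_k)^{n−m})`,
where `U_j(x) = ∑_k a_{j,k} x_k` and `[x_1⋯x_n]` denotes the coefficient of the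
monomial `x_1⋯x_n` (the `MvPolynomial` coefficient at exponent `∑ k, Finsupp.single k 1`). -/
noncomputable def GZ {N n : ℕ} (Z : Matrix (Fin N) (Fin n) ℂ) (m : ℕ) : ℂ :=
  ((N - m).factorial : ℂ) / (((n - m).factorial : ℂ) * (N.factorial : ℂ)) *
    MvPolynomial.coeff (∑ k : Fin n, Finsupp.single k 1)
      ((∏ j : Fin N,
          (1 + ∑ k : Fin n, MvPolynomial.C (aEnt Z j k) * MvPolynomial.X k)) *
        (∑ k : Fin n, MvPolynomial.C (ztilde Z k) * MvPolynomial.X k) ^ (n - m))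

/-- `H_ℓ(Z) = ∑_{m=0}^ℓ G_m(Z)`. -/
noncomputable def HZ {N n : ℕ} (Z : Matrix (Fin N) (Fin n) ℂ) (ℓ : ℕ) : ℂ :=
  ∑ m ∈ Finset.range (ℓ + 1), GZ Z m

/-- `C_ℓ = (e^ℓ · ℓ! / ℓ^{ℓ+1/2})^{1/2}`. -/
noncomputable def Cconst (ℓ : ℕ) : ℝ :=
  Real.sqrt (Real.exp ℓ * ℓ.factorial / (ℓ : ℝ) ^ ((ℓ : ℝ) + 1 / 2))

/-- `α = (1/(nN)) ∑_{j=1}^N ∑_{k=1}^n |a_{j,k}|²`. -/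
noncomputable def alphaZ {N n : ℕ} (Z : Matrix (Fin N) (Fin n) ℂ) : ℝ :=
  ((n : ℝ) * N)⁻¹ * ∑ j : Fin N, ∑ k : Fin n, ‖aEnt Z j k‖ ^ 2

/-- `β = (1/n) ∑_{k=1}^n |z̃_k|²`. -/
noncomputable def betaZ {N n : ℕ} (Z : Matrix (Fin N) (Fin n) ℂ) : ℝ :=
  (n : ℝ)⁻¹ * ∑ k : Fin n, ‖ztilde Z k‖ ^ 2

/-- `γ(d) = (nα/N)·min{dn, 1/(1−β)}`; for `β = 1` the quantity `1/(1−β)` is `+∞`,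
so the minimum is interpreted as `dn`. `γ = γ(1)`. -/
noncomputable def gammaZ {N n : ℕ} (Z : Matrix (Fin N) (Fin n) ℂ) (d : ℝ) : ℝ :=
  (n : ℝ) * alphaZ Z / N *
    (if betaZ Z < 1 then min (d * n) (1 / (1 - betaZ Z)) else d * n)


section Aux

open Finset MvPolynomial

noncomputable def eT {n : ℕ} (T : Finset (Fin n)) : Fin n →₀ ℕ := ∑ k ∈ T, Finsupp.single k 1

lemma eT_apply {n : ℕ} (T : Finset (Fin n)) (k : Fin n) : eT T k = if k ∈ T then 1 else 0 := by
  classical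
  simp [eT, Finsupp.finset_sum_apply, Finsupp.single_apply]

lemma eT_support {n : ℕ} (T : Finset (Fin n)) : (eT T).support = T := by
  ext k; simp only [Finsupp.mem_support_iff, eT_apply]
  split <;> simp_all

lemma eT_empty {n : ℕ} : eT (∅ : Finset (Fin n)) = 0 := by simp [eT]

lemma eT_sub {n : ℕ} {T : Finset (Fin n)} {k : Fin n} (hk : k ∈ T) :
    eT T - Finsupp.single k 1 = eT (T.erase k) := by
  ext l
  rw [Finsupp.tsub_apply]
  by_cases h : l = k
  · simp [eT_apply, Finsupp.single_apply, h, hk]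
  · simp [eT_apply, Finsupp.single_apply, h, Ne.symm h, hk, Finset.mem_erase]

lemma eT_degree {n : ℕ} (T : Finset (Fin n)) : (eT T).degree = T.card := by
  rw [Finsupp.degree_apply, eT_support]
  simp [eT_apply]

lemma sigma_reindex {α : Type*} [DecidableEq α] (r : ℕ) (T : Finset α) (F : α → Finset α → ℂ) :
    ∑ k ∈ T, ∑ W ∈ (T.erase k).powersetCard r, F k (insert k W)
      = ∑ W ∈ T.powersetCard (r+1), ∑ k ∈ W, F k W := by
  rw [Finset.sum_sigma', Finset.sum_sigma']
  refine Finset.sum_nbij' (fun x => ⟨insert x.1 x.2, x.1⟩) (fun x => ⟨x.2, x.1.erase x.2⟩)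
    ?_ ?_ ?_ ?_ ?_
  · rintro ⟨k, W⟩ h
    simp only [Finset.mem_sigma, Finset.mem_powersetCard] at h ⊢
    have hkW : k ∉ W := fun hkk => (Finset.mem_erase.mp (h.2.1 hkk)).1 rfl
    refine ⟨⟨fun x hx => ?_, ?_⟩, Finset.mem_insert_self _ _⟩
    · rcases Finset.mem_insert.mp hx with h' | h'
      · exact h' ▸ h.1
      · exact Finset.mem_of_mem_erase (h.2.1 h')
    · rw [Finset.card_insert_of_notMem hkW, h.2.2]
  · rintro ⟨W, k⟩ h
    simp only [Finset.mem_sigma, Finset.mem_powersetCard] at h ⊢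
    obtain ⟨⟨hW, hWc⟩, hk⟩ := h
    refine ⟨hW hk, fun x hx => Finset.mem_erase.mpr ⟨(Finset.mem_erase.mp hx).1,
      hW (Finset.mem_of_mem_erase hx)⟩, ?_⟩
    rw [Finset.card_erase_of_mem hk, hWc]; omega
  · rintro ⟨k, W⟩ h
    simp only [Finset.mem_sigma, Finset.mem_powersetCard] at h
    have hkW : k ∉ W := fun hkk => (Finset.mem_erase.mp (h.2.1 hkk)).1 rfl
    simp [Finset.erase_insert hkW]
  · rintro ⟨W, k⟩ h
    simp only [Finset.mem_sigma, Finset.mem_powersetCard] at h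
    simp [Finset.insert_erase h.2]
  · rintro ⟨k, W⟩ h
    simp only [Finset.mem_sigma, Finset.mem_powersetCard] at h
    have hkW : k ∉ W := fun hkk => (Finset.mem_erase.mp (h.2.1 hkk)).1 rfl
    simp [Finset.erase_insert hkW]

lemma coeff_mul_linear {n : ℕ} (T : Finset (Fin n)) (p : MvPolynomial (Fin n) ℂ) (w : Fin n → ℂ) :
    coeff (eT T) (p * ∑ k : Fin n, C (w k) * X k)
      = ∑ k ∈ T, w k * coeff (eT (T.erase k)) p := by
  rw [Finset.mul_sum, coeff_sum]
  have h1 : ∀ k : Fin n, p * (C (w k) * X k) = C (w k) * (p * X k) := fun k => by ring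
  calc ∑ k : Fin n, coeff (eT T) (p * (C (w k) * X k))
      = ∑ k : Fin n, if k ∈ T then w k * coeff (eT (T.erase k)) p else 0 := by
        refine Finset.sum_congr rfl fun k _ => ?_
        rw [h1, coeff_C_mul, coeff_mul_X', eT_support]
        split
        · rw [eT_sub ‹k ∈ T›]
        · rw [mul_zero]
    _ = ∑ k ∈ T, w k * coeff (eT (T.erase k)) p := by
        rw [Finset.sum_ite_mem, Finset.univ_inter]

lemma coeff_mul_linear_pow {n : ℕ} (w : Fin n → ℂ) (r : ℕ) :
    ∀ (T : Finset (Fin n)) (q : MvPolynomial (Fin n) ℂ),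
    coeff (eT T) (q * (∑ k : Fin n, C (w k) * X k) ^ r)
      = ∑ W ∈ T.powersetCard r,
          (r.factorial : ℂ) * (∏ k ∈ W, w k) * coeff (eT (T \ W)) q := by
  induction r with
  | zero => intro T q; simp
  | succ r ih =>
    intro T q
    rw [pow_succ, ← mul_assoc, coeff_mul_linear]
    have hsum : ∀ k ∈ T, w k * coeff (eT (T.erase k)) (q * (∑ k : Fin n, C (w k) * X k) ^ r)
        = ∑ W ∈ (T.erase k).powersetCard r,
            (fun (k : Fin n) (W : Finset (Fin n)) =>
              w k * ((r.factorial : ℂ) * (∏ k' ∈ W.erase k, w k') * coeff (eT (T \ W)) q))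
              k (insert k W) := by
      intro k hk
      rw [ih, Finset.mul_sum]
      refine Finset.sum_congr rfl fun W hW => ?_
      rw [Finset.mem_powersetCard] at hW
      have hkW : k ∉ W := fun hkk => (Finset.mem_erase.mp (hW.1 hkk)).1 rfl
      simp only
      rw [Finset.erase_insert hkW]
      congr 3
      rw [Finset.sdiff_insert, Finset.erase_sdiff_comm]
    rw [Finset.sum_congr rfl hsum, sigma_reindex r T (fun k W =>
      w k * ((r.factorial : ℂ) * (∏ k' ∈ W.erase k, w k') * coeff (eT (T \ W)) q))]
    refine Finset.sum_congr rfl fun W hW => ?_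
    rw [Finset.mem_powersetCard] at hW
    have : ∀ k ∈ W, w k * ((r.factorial : ℂ) * (∏ k' ∈ W.erase k, w k') * coeff (eT (T \ W)) q)
        = (r.factorial : ℂ) * (∏ k' ∈ W, w k') * coeff (eT (T \ W)) q := by
      intro k hk
      rw [← Finset.prod_erase_mul W w hk]; ring
    rw [Finset.sum_congr rfl this, Finset.sum_const, hW.2, nsmul_eq_mul, Nat.factorial_succ]
    push_cast; ring

variable {R : Type*} [CommRing R] {ι : Type*} [DecidableEq ι]

lemma esymmCons' (r : ℕ) {a : ι} {s : Finset ι} (ha : a ∉ s) (u : ι → R) :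
    ∑ S ∈ (insert a s).powersetCard (r+1), ∏ i ∈ S, u i
      = (∑ S ∈ s.powersetCard (r+1), ∏ i ∈ S, u i)
        + u a * ∑ S ∈ s.powersetCard r, ∏ i ∈ S, u i := by
  rw [Finset.powersetCard_succ_insert ha, Finset.sum_union, Finset.sum_image, Finset.mul_sum]
  · congr 1
    refine Finset.sum_congr rfl fun S hS => ?_
    rw [Finset.mem_powersetCard] at hS
    rw [Finset.prod_insert (fun h => ha (hS.1 h))]
  · intro S1 h1 S2 h2 h
    rw [Finset.mem_coe, Finset.mem_powersetCard] at h1 h2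
    have e1 : S1 = (insert a S1).erase a := by
      rw [Finset.erase_insert (fun h => ha (h1.1 h))]
    rw [e1, h, Finset.erase_insert (fun h => ha (h2.1 h))]
  · rw [Finset.disjoint_right]
    intro S hS1 hS2
    rw [Finset.mem_image] at hS1
    obtain ⟨S', hS', rfl⟩ := hS1
    rw [Finset.mem_powersetCard] at hS2
    exact ha (hS2.1 (Finset.mem_insert_self _ _))

omit [DecidableEq ι] in
lemma esymmOne' (s : Finset ι) (u : ι → R) :
    ∑ S ∈ s.powersetCard 1, ∏ i ∈ S, u i = ∑ i ∈ s, u i := by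
  rw [Finset.powersetCard_one, Finset.sum_map]
  simp

lemma sqSum' (s : Finset ι) (u : ι → R) :
    (∑ i ∈ s, u i)^2 = (∑ i ∈ s, u i^2)
      + 2 * ∑ S ∈ s.powersetCard 2, ∏ i ∈ S, u i := by
  induction s using Finset.induction_on with
  | empty => rw [Finset.powersetCard_eq_empty.2 (by simp)]; simp
  | insert a s ha ih =>
    have h2 := esymmCons' 1 ha u
    norm_num at h2
    rw [Finset.sum_insert ha, Finset.sum_insert ha, h2, esymmOne']
    linear_combination ih

lemma cubeSum' (s : Finset ι) (u : ι → R) :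
    (∑ i ∈ s, u i)^3 = 6 * (∑ S ∈ s.powersetCard 3, ∏ i ∈ S, u i)
      + 3 * (∑ i ∈ s, u i) * (∑ i ∈ s, u i^2) - 2 * ∑ i ∈ s, u i^3 := by
  induction s using Finset.induction_on with
  | empty => rw [Finset.powersetCard_eq_empty.2 (by simp)]; simp
  | insert a s ha ih =>
    have h3 := esymmCons' 2 ha u
    norm_num at h3
    rw [Finset.sum_insert ha, Finset.sum_insert ha, Finset.sum_insert ha, h3]
    linear_combination ih + 3 * u a * sqSum' s u

end Aux

section Main

open Finset MvPolynomial

variable {N n : ℕ} (Z : Matrix (Fin N) (Fin n) ℂ)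

lemma col_sum_zero (hN : N ≠ 0) (k : Fin n) : ∑ j : Fin N, aEnt Z j k = 0 := by
  have hNc : (N : ℂ) ≠ 0 := Nat.cast_ne_zero.mpr hN
  simp only [aEnt, ztilde, Finset.sum_sub_distrib, Finset.sum_const, Finset.card_univ,
    Fintype.card_fin, nsmul_eq_mul]
  field_simp
  simp

lemma sumU_eq_zero (hN : N ≠ 0) :
    ∑ j : Fin N, (∑ k : Fin n, C (aEnt Z j k) * X k : MvPolynomial (Fin n) ℂ) = 0 := by
  rw [Finset.sum_comm]
  refine Finset.sum_eq_zero fun k _ => ?_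
  rw [← Finset.sum_mul, ← map_sum, col_sum_zero Z hN k, map_zero, zero_mul]

lemma U_hom (j : Fin N) :
    (∑ k : Fin n, C (aEnt Z j k) * X k : MvPolynomial (Fin n) ℂ).IsHomogeneous 1 :=
  MvPolynomial.IsHomogeneous.sum _ _ _ fun k _ => isHomogeneous_C_mul_X _ k

lemma prodU_hom (S : Finset (Fin N)) :
    (∏ j ∈ S, ∑ k : Fin n, C (aEnt Z j k) * X k : MvPolynomial (Fin n) ℂ).IsHomogeneous
      S.card := by
  rw [Finset.card_eq_sum_ones]
  exact MvPolynomial.IsHomogeneous.prod S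
    (fun j => (∑ k : Fin n, C (aEnt Z j k) * X k : MvPolynomial (Fin n) ℂ)) (fun _ => 1)
    (fun j _ => U_hom Z j)

lemma coeff_P (m : ℕ) (hmN : m ≤ N) (K : Finset (Fin n)) (hK : K.card = m) :
    coeff (eT K) (∏ j : Fin N, (1 + ∑ k : Fin n, C (aEnt Z j k) * X k))
      = ∑ S ∈ Finset.powersetCard m (Finset.univ : Finset (Fin N)),
          coeff (eT K) (∏ j ∈ S, ∑ k : Fin n, C (aEnt Z j k) * X k) := by
  have h1 : (∏ j : Fin N, (1 + ∑ k : Fin n, C (aEnt Z j k) * X k))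
      = ∏ j : Fin N, ((∑ k : Fin n, C (aEnt Z j k) * X k) + 1) :=
    Finset.prod_congr rfl fun j _ => add_comm _ _
  rw [h1, Finset.prod_add]
  simp only [Finset.prod_const_one, mul_one]
  rw [coeff_sum, Finset.sum_powerset, Finset.card_univ, Fintype.card_fin]
  refine Finset.sum_eq_single m (fun r _ hrm => Finset.sum_eq_zero fun S hS => ?_)
    (fun hm => absurd (Finset.mem_range.mpr (Nat.lt_succ_of_le hmN)) hm)
  rw [Finset.mem_powersetCard] at hS
  refine (prodU_hom Z S).coeff_eq_zero ?_
  rw [eT_degree, hK, hS.2]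
  exact Ne.symm hrm

lemma coeff_U_pow (j : Fin N) (m : ℕ) (K : Finset (Fin n)) (hK : K.card = m) :
    coeff (eT K) ((∑ k : Fin n, C (aEnt Z j k) * X k) ^ m)
      = (m.factorial : ℂ) * ∏ k ∈ K, aEnt Z j k := by
  rw [← one_mul ((∑ k : Fin n, C (aEnt Z j k) * X k) ^ m), coeff_mul_linear_pow,
    ← hK, Finset.powersetCard_self, Finset.sum_singleton, Finset.sdiff_self, eT_empty]
  simp

lemma coeff_P_two (hN : N ≠ 0) (K : Finset (Fin n)) (hK : K.card = 2) (h2N : 2 ≤ N) :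
    coeff (eT K) (∏ j : Fin N, (1 + ∑ k : Fin n, C (aEnt Z j k) * X k))
      = - ∑ j : Fin N, ∏ k ∈ K, aEnt Z j k := by
  rw [coeff_P Z 2 h2N K hK]
  have hid := sqSum' (Finset.univ : Finset (Fin N))
    (fun j => (∑ k : Fin n, C (aEnt Z j k) * X k : MvPolynomial (Fin n) ℂ))
  rw [sumU_eq_zero Z hN] at hid
  have hid2 : (2 : MvPolynomial (Fin n) ℂ) *
      (∑ S ∈ Finset.powersetCard 2 (Finset.univ : Finset (Fin N)),
        ∏ j ∈ S, ∑ k : Fin n, C (aEnt Z j k) * X k)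
      = - ∑ j : Fin N, (∑ k : Fin n, C (aEnt Z j k) * X k) ^ 2 := by
    linear_combination -hid
  have h2 : (2 : MvPolynomial (Fin n) ℂ) = C (2 : ℂ) := (map_ofNat C 2).symm
  have hco := congrArg (coeff (eT K)) hid2
  rw [h2, coeff_C_mul, coeff_neg, coeff_sum, coeff_sum] at hco
  have hUc : ∀ j ∈ (Finset.univ : Finset (Fin N)),
      coeff (eT K) ((∑ k : Fin n, C (aEnt Z j k) * X k) ^ 2)
      = (2 : ℂ) * ∏ k ∈ K, aEnt Z j k := by
    intro j _; rw [coeff_U_pow Z j 2 K hK]; norm_num [Nat.factorial]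
  rw [Finset.sum_congr rfl hUc, ← Finset.mul_sum] at hco
  linear_combination hco / 2

lemma coeff_P_three (hN : N ≠ 0) (K : Finset (Fin n)) (hK : K.card = 3) (h3N : 3 ≤ N) :
    coeff (eT K) (∏ j : Fin N, (1 + ∑ k : Fin n, C (aEnt Z j k) * X k))
      = 2 * ∑ j : Fin N, ∏ k ∈ K, aEnt Z j k := by
  rw [coeff_P Z 3 h3N K hK]
  have hid := cubeSum' (Finset.univ : Finset (Fin N))
    (fun j => (∑ k : Fin n, C (aEnt Z j k) * X k : MvPolynomial (Fin n) ℂ))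
  rw [sumU_eq_zero Z hN] at hid
  have hid2 : (6 : MvPolynomial (Fin n) ℂ) *
      (∑ S ∈ Finset.powersetCard 3 (Finset.univ : Finset (Fin N)),
        ∏ j ∈ S, ∑ k : Fin n, C (aEnt Z j k) * X k)
      = (2 : MvPolynomial (Fin n) ℂ) *
        ∑ j : Fin N, (∑ k : Fin n, C (aEnt Z j k) * X k) ^ 3 := by
    linear_combination -hid
  have h6 : (6 : MvPolynomial (Fin n) ℂ) = C (6 : ℂ) := (map_ofNat C 6).symm
  have h2 : (2 : MvPolynomial (Fin n) ℂ) = C (2 : ℂ) := (map_ofNat C 2).symm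
  have hco := congrArg (coeff (eT K)) hid2
  rw [h6, h2, coeff_C_mul, coeff_C_mul, coeff_sum, coeff_sum] at hco
  have hUc : ∀ j ∈ (Finset.univ : Finset (Fin N)),
      coeff (eT K) ((∑ k : Fin n, C (aEnt Z j k) * X k) ^ 3)
      = (6 : ℂ) * ∏ k ∈ K, aEnt Z j k := by
    intro j _; rw [coeff_U_pow Z j 3 K hK]; norm_num [Nat.factorial]
  rw [Finset.sum_congr rfl hUc, ← Finset.mul_sum] at hco
  linear_combination hco / 6

lemma main_coeff (m : ℕ) (hm : m ≤ n) :
    coeff (eT (Finset.univ : Finset (Fin n)))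
        ((∏ j : Fin N, (1 + ∑ k : Fin n, C (aEnt Z j k) * X k)) *
          (∑ k : Fin n, C (ztilde Z k) * X k) ^ (n - m))
      = ∑ K ∈ Finset.powersetCard m (Finset.univ : Finset (Fin n)),
          ((n - m).factorial : ℂ) * (∏ k ∈ Kᶜ, ztilde Z k) *
            coeff (eT K) (∏ j : Fin N, (1 + ∑ k : Fin n, C (aEnt Z j k) * X k)) := by
  rw [coeff_mul_linear_pow]
  refine Finset.sum_nbij' (fun W => Wᶜ) (fun K => Kᶜ) ?_ ?_ ?_ ?_ ?_
  · intro W hW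
    rw [Finset.mem_powersetCard_univ] at hW ⊢
    rw [Finset.card_compl, Fintype.card_fin, hW]
    omega
  · intro K hK
    rw [Finset.mem_powersetCard_univ] at hK ⊢
    rw [Finset.card_compl, Fintype.card_fin, hK]
  · intro W _; exact compl_compl W
  · intro K _; exact compl_compl K
  · intro W _
    rw [compl_compl, ← Finset.compl_eq_univ_sdiff]

end Main

/-- `G_2(Z) = −((N−2)!/N!) ∑_{|K|=2} (∑_j ∏_{k∈K} a_{j,k}) ∏_{k∉K} z̃_k`, and if `n ≥ 3`
(and hence `N ≥ 3`) also
`G_3(Z) = 2((N−3)!/N!) ∑_{|K|=3} (∑_j ∏_{k∈K} a_{j,k}) ∏_{k∉K} z̃_k`. -/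
theorem stmt16 (N n : ℕ) (hn2 : 2 ≤ n) (hnN : n ≤ N)
    (Z : Matrix (Fin N) (Fin n) ℂ) :
    GZ Z 2 = -(((N - 2).factorial : ℂ) / (N.factorial : ℂ)) *
        ∑ K ∈ Finset.powersetCard 2 (Finset.univ : Finset (Fin n)),
          (∑ j : Fin N, ∏ k ∈ K, aEnt Z j k) * ∏ k ∈ Kᶜ, ztilde Z k ∧
      (3 ≤ n → 3 ≤ N →
        GZ Z 3 = 2 * (((N - 3).factorial : ℂ) / (N.factorial : ℂ)) *
          ∑ K ∈ Finset.powersetCard 3 (Finset.univ : Finset (Fin n)),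
            (∑ j : Fin N, ∏ k ∈ K, aEnt Z j k) * ∏ k ∈ Kᶜ, ztilde Z k) := by
  classical
  have hN0 : N ≠ 0 := by omega
  have hNfac : ((N.factorial : ℂ)) ≠ 0 := Nat.cast_ne_zero.mpr (Nat.factorial_ne_zero N)
  constructor
  · have hmono : (∑ k : Fin n, Finsupp.single k 1 : Fin n →₀ ℕ)
        = eT (Finset.univ : Finset (Fin n)) := rfl
    rw [GZ, hmono, main_coeff Z 2 hn2, Finset.mul_sum]
    rw [Finset.mul_sum]
    refine Finset.sum_congr rfl fun K hK => ?_
    rw [Finset.mem_powersetCard_univ] at hK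
    rw [coeff_P_two Z hN0 K hK (le_trans hn2 hnN)]
    have hfac2 : (((n-2).factorial : ℂ)) ≠ 0 := Nat.cast_ne_zero.mpr (Nat.factorial_ne_zero _)
    field_simp
  · intro hn3 hN3
    have hmono : (∑ k : Fin n, Finsupp.single k 1 : Fin n →₀ ℕ)
        = eT (Finset.univ : Finset (Fin n)) := rfl
    rw [GZ, hmono, main_coeff Z 3 hn3, Finset.mul_sum]
    rw [Finset.mul_sum]
    refine Finset.sum_congr rfl fun K hK => ?_
    rw [Finset.mem_powersetCard_univ] at hK
    rw [coeff_P_three Z hN0 K hK hN3]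
    have hfac3 : (((n-3).factorial : ℂ)) ≠ 0 := Nat.cast_ne_zero.mpr (Nat.factorial_ne_zero _)
    field_simp
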